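/- For any jointly Borel-measurable T : 𝕏 × 𝕏 × 𝕐 → 𝕐, the triple integral ∫∫∫ [ −2 k(y, T(x,x',y')) + k(T(x,x',y'), T(x,x'',y'')) ] dμ(x,y) dμ(x',y') dμ(x'',y'') equals ∫ ‖m(x) − g_T(x)‖²_H dν(x) − ∫ ‖m(x)‖²_H dν(x), and also equals ℓ(T) − ∫ ‖ψ(y)‖²_H dμ(x,y). In particular, it equals ℓ(T) plus a constant not depending on T. -/

import Mathlib

open MeasureTheory ProbabilityTheory RealInnerProductSpace

noncomputable section

variable {𝕏 𝕐 : Type*} [MeasurableSpace 𝕏] [MeasurableSpace 𝕐]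
variable {H : Type*} [NormedAddCommGroup H] [InnerProductSpace ℝ H]

/-- `g_T(x) := ∫ ψ(T(x, x', y')) dμ(x', y')` where `μ = ν ⊗ κ`. -/
def gEmb (ν : Measure 𝕏) (κ : Kernel 𝕏 𝕐) (ψ : 𝕐 → H)
    (T : 𝕏 → 𝕏 → 𝕐 → 𝕐) (x : 𝕏) : H :=
  ∫ q, ψ (T x q.1 q.2) ∂(ν.compProd κ)

/-- Kernel mean embedding `m(x) := ∫ ψ(y) dκ(x)(y)`. -/
def mEmb (κ : Kernel 𝕏 𝕐) (ψ : 𝕐 → H) (x : 𝕏) : H :=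
  ∫ y, ψ y ∂(κ x)

/-- Population CMMD loss `ℓ(T) := ∫ ‖ψ(y) − g_T(x)‖² dμ(x,y)` where `μ = ν ⊗ κ`. -/
def cmmdLoss (ν : Measure 𝕏) (κ : Kernel 𝕏 𝕐) (ψ : 𝕐 → H)
    (T : 𝕏 → 𝕏 → 𝕐 → 𝕐) : ℝ :=
  ∫ q, ‖ψ q.2 - gEmb ν κ ψ T q.1‖ ^ 2 ∂(ν.compProd κ)

/-- The triple integral
`∫∫∫ [−2 k(y, T(x,x',y')) + k(T(x,x',y'), T(x,x'',y''))] dμ dμ dμ`,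
with `k(y, y') := ⟪ψ y, ψ y'⟫`. -/
def tripleCMMD (ν : Measure 𝕏) (κ : Kernel 𝕏 𝕐) (ψ : 𝕐 → H)
    (T : 𝕏 → 𝕏 → 𝕐 → 𝕐) : ℝ :=
  ∫ z, (∫ z', (∫ z'',
      (-2 * ⟪ψ z.2, ψ (T z.1 z'.1 z'.2)⟫ +
        ⟪ψ (T z.1 z'.1 z'.2), ψ (T z.1 z''.1 z''.2)⟫)
    ∂(ν.compProd κ)) ∂(ν.compProd κ)) ∂(ν.compProd κ)

/-- For any jointly measurable `T`, the triple CMMD integral equals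
`∫ ‖m(x) − g_T(x)‖² dν − ∫ ‖m(x)‖² dν`, and also equals `ℓ(T) − ∫ ‖ψ(y)‖² dμ(x,y)`;
in particular it equals `ℓ(T)` plus a constant not depending on `T`. -/
private lemma aux_integrable {α E : Type*} [MeasurableSpace α] [NormedAddCommGroup E]
    {P : Measure α} [IsFiniteMeasure P]
    {f : α → E} (hf : AEStronglyMeasurable f P) {D : ℝ} (h : ∀ a, ‖f a‖ ≤ D) :
    Integrable f P :=
  (integrable_const D).mono' hf (ae_of_all _ h)

lemma tripleCMMD_eq_aux
    (ν : Measure 𝕏) [IsProbabilityMeasure ν]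
    (κ : Kernel 𝕏 𝕐) [IsMarkovKernel κ] [CompleteSpace H]
    (ψ : 𝕐 → H) (hψ : StronglyMeasurable ψ) (C : ℝ) (hψ_bdd : ∀ y, ‖ψ y‖ ≤ C)
    (T : 𝕏 → 𝕏 → 𝕐 → 𝕐)
    (hT : Measurable fun q : (𝕏 × 𝕏) × 𝕐 => T q.1.1 q.1.2 q.2) :
    tripleCMMD ν κ ψ T
      = (∫ x, ‖mEmb κ ψ x - gEmb ν κ ψ T x‖ ^ 2 ∂ν) - ∫ x, ‖mEmb κ ψ x‖ ^ 2 ∂ν ∧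
    tripleCMMD ν κ ψ T
      = cmmdLoss ν κ ψ T - ∫ z, ‖ψ z.2‖ ^ 2 ∂(ν.compProd κ) := by
  have hX : Nonempty 𝕏 := by
    by_contra h
    rw [not_nonempty_iff] at h
    have h1 : ν Set.univ = 1 := measure_univ
    rw [Set.univ_eq_empty_iff.mpr h] at h1
    simp at h1
  set μ := ν.compProd κ with hμdef
  have hprob : IsProbabilityMeasure μ := by rw [hμdef]; infer_instance
  set g := gEmb ν κ ψ T with hgdef
  set m := mEmb κ ψ with hmdef
  have hφ : StronglyMeasurable (fun p : 𝕏 × (𝕏 × 𝕐) => ψ (T p.1 p.2.1 p.2.2)) :=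
    hψ.comp_measurable (hT.comp
      ((measurable_fst.prodMk measurable_snd.fst).prodMk measurable_snd.snd))
  have hφx : ∀ x : 𝕏, StronglyMeasurable (fun q : 𝕏 × 𝕐 => ψ (T x q.1 q.2)) := fun x =>
    hφ.comp_measurable (measurable_const.prodMk measurable_id)
  have hφx_int : ∀ x, Integrable (fun q : 𝕏 × 𝕐 => ψ (T x q.1 q.2)) μ := fun x =>
    ((integrable_const C).mono' (hφx x).aestronglyMeasurable
      (ae_of_all _ fun q => hψ_bdd _))
  have hg_sm : StronglyMeasurable g := hφ.integral_prod_right'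
  have hg_bdd : ∀ x, ‖g x‖ ≤ C := fun x => by
    calc ‖g x‖ ≤ C * (μ Set.univ).toReal :=
          norm_integral_le_of_norm_le_const (ae_of_all _ fun q => hψ_bdd _)
    _ = C := by simp
  have hm_sm : StronglyMeasurable m :=
    MeasureTheory.StronglyMeasurable.integral_kernel_prod_right
      (κ := κ) (f := fun _ y => ψ y) (hψ.comp_measurable measurable_snd)
  have hm_bdd : ∀ x, ‖m x‖ ≤ C := fun x => by
    calc ‖m x‖ ≤ C * ((κ x) Set.univ).toReal :=
          norm_integral_le_of_norm_le_const (ae_of_all _ fun y => hψ_bdd _)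
    _ = C := by simp
  have hC : 0 ≤ C := le_trans (norm_nonneg _) (hm_bdd (Classical.arbitrary 𝕏))
  -- key computation
  have key : tripleCMMD ν κ ψ T
      = ∫ z : 𝕏 × 𝕐, (-2 * ⟪ψ z.2, g z.1⟫ + ‖g z.1‖ ^ 2) ∂μ := by
    refine integral_congr_ae (ae_of_all _ fun z => ?_)
    have h1 : ∀ z' : 𝕏 × 𝕐,
        (∫ z'' : 𝕏 × 𝕐, (-2 * ⟪ψ z.2, ψ (T z.1 z'.1 z'.2)⟫ +
          ⟪ψ (T z.1 z'.1 z'.2), ψ (T z.1 z''.1 z''.2)⟫) ∂μ)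
        = -2 * ⟪ψ z.2, ψ (T z.1 z'.1 z'.2)⟫ + ⟪g z.1, ψ (T z.1 z'.1 z'.2)⟫ := by
      intro z'
      rw [integral_add (integrable_const _) ((hφx_int z.1).const_inner _),
        integral_const, integral_inner (hφx_int z.1), probReal_univ]
      rw [real_inner_comm (ψ (T z.1 z'.1 z'.2)) (g z.1)]
      simp
      rfl
    calc (∫ z', (∫ z'', (-2 * ⟪ψ z.2, ψ (T z.1 z'.1 z'.2)⟫ +
            ⟪ψ (T z.1 z'.1 z'.2), ψ (T z.1 z''.1 z''.2)⟫) ∂μ) ∂μ)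
        = ∫ z' : 𝕏 × 𝕐, (-2 * ⟪ψ z.2, ψ (T z.1 z'.1 z'.2)⟫ +
            ⟪g z.1, ψ (T z.1 z'.1 z'.2)⟫) ∂μ :=
          integral_congr_ae (ae_of_all _ h1)
      _ = -2 * ⟪ψ z.2, g z.1⟫ + ‖g z.1‖ ^ 2 := by
          rw [integral_add (((hφx_int z.1).const_inner _).const_mul _)
              ((hφx_int z.1).const_inner _),
            integral_const_mul, integral_inner (hφx_int z.1),
            integral_inner (hφx_int z.1)]
          rw [show (∫ q : 𝕏 × 𝕐, ψ (T z.1 q.1 q.2) ∂μ) = g z.1 from rfl,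
            real_inner_self_eq_norm_sq]
  -- integrability facts
  have habs : ∀ (a b : H), ‖a‖ ≤ C → ‖b‖ ≤ C →
      ‖-2 * ⟪a, b⟫ + ‖b‖ ^ 2‖ ≤ 2 * (C * C) + C * C := by
    intro a b ha hb
    have h1 := abs_le.mp (le_trans (abs_real_inner_le_norm a b)
      (mul_le_mul ha hb (norm_nonneg _) hC))
    have h2 : ‖b‖ ^ 2 ≤ C * C := by nlinarith [norm_nonneg b]
    have h3 : (0 : ℝ) ≤ ‖b‖ ^ 2 := sq_nonneg _
    rw [Real.norm_eq_abs, abs_le]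
    constructor <;> nlinarith
  have hF_int : Integrable (fun z : 𝕏 × 𝕐 => -2 * ⟪ψ z.2, g z.1⟫ + ‖g z.1‖ ^ 2) μ := by
    refine aux_integrable ?_ (fun z => habs _ _ (hψ_bdd _) (hg_bdd _))
    exact ((aestronglyMeasurable_const.mul
        (((hψ.comp_measurable measurable_snd).aestronglyMeasurable).inner
          ((hg_sm.comp_measurable measurable_fst).aestronglyMeasurable))).add
      (((continuous_pow 2).comp_stronglyMeasurable
        (hg_sm.comp_measurable measurable_fst).norm).aestronglyMeasurable))
  have hψ2_int : Integrable (fun z : 𝕏 × 𝕐 => ‖ψ z.2‖ ^ 2) μ := by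
    refine aux_integrable (((continuous_pow 2).comp_stronglyMeasurable
      (hψ.comp_measurable measurable_snd).norm).aestronglyMeasurable) (D := C * C) ?_
    intro z
    rw [Real.norm_eq_abs, abs_of_nonneg (sq_nonneg _)]
    nlinarith [hψ_bdd z.2, norm_nonneg (ψ z.2)]
  constructor
  · -- first equality
    have step : ∀ x : 𝕏, (∫ y, (-2 * ⟪ψ y, g x⟫ + ‖g x‖ ^ 2) ∂(κ x))
        = ‖m x - g x‖ ^ 2 - ‖m x‖ ^ 2 := by
      intro x
      have hint : Integrable ψ (κ x) :=
        aux_integrable (P := κ x) hψ.aestronglyMeasurable hψ_bdd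
      have hflip : ∀ y : 𝕐, -2 * ⟪ψ y, g x⟫ + ‖g x‖ ^ 2
          = -2 * ⟪g x, ψ y⟫ + ‖g x‖ ^ 2 := fun y => by rw [real_inner_comm]
      rw [integral_congr_ae (ae_of_all _ hflip),
        integral_add ((hint.const_inner _).const_mul _) (integrable_const _),
        integral_const_mul, integral_inner hint, integral_const, probReal_univ]
      rw [show (∫ y, ψ y ∂(κ x)) = m x from rfl, norm_sub_sq_real,
        real_inner_comm (g x) (m x)]
      simp
      ring
    calc tripleCMMD ν κ ψ T
        = ∫ z : 𝕏 × 𝕐, (-2 * ⟪ψ z.2, g z.1⟫ + ‖g z.1‖ ^ 2) ∂μ := key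
      _ = ∫ x, ∫ y, (-2 * ⟪ψ y, g x⟫ + ‖g x‖ ^ 2) ∂(κ x) ∂ν :=
          Measure.integral_compProd hF_int
      _ = ∫ x, (‖m x - g x‖ ^ 2 - ‖m x‖ ^ 2) ∂ν :=
          integral_congr_ae (ae_of_all _ step)
      _ = (∫ x, ‖m x - g x‖ ^ 2 ∂ν) - ∫ x, ‖m x‖ ^ 2 ∂ν := by
          refine integral_sub ?_ ?_
          · refine aux_integrable (((continuous_pow 2).comp_stronglyMeasurable
              (hm_sm.sub hg_sm).norm).aestronglyMeasurable) (D := (C + C) ^ 2) ?_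
            intro x
            rw [Real.norm_eq_abs, abs_of_nonneg (sq_nonneg _)]
            have := norm_sub_le (m x) (g x)
            nlinarith [norm_nonneg (m x - g x), hm_bdd x, hg_bdd x]
          · refine aux_integrable (((continuous_pow 2).comp_stronglyMeasurable
              hm_sm.norm).aestronglyMeasurable) (D := C * C) ?_
            intro x
            rw [Real.norm_eq_abs, abs_of_nonneg (sq_nonneg _)]
            nlinarith [hm_bdd x, norm_nonneg (m x)]
  · -- second equality
    have hpt : ∀ z : 𝕏 × 𝕐, ‖ψ z.2 - g z.1‖ ^ 2
        = ‖ψ z.2‖ ^ 2 + (-2 * ⟪ψ z.2, g z.1⟫ + ‖g z.1‖ ^ 2) := by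
      intro z; rw [norm_sub_sq_real]; ring
    have hloss : cmmdLoss ν κ ψ T
        = ∫ z : 𝕏 × 𝕐, (‖ψ z.2‖ ^ 2 + (-2 * ⟪ψ z.2, g z.1⟫ + ‖g z.1‖ ^ 2)) ∂μ :=
      integral_congr_ae (ae_of_all _ hpt)
    rw [key, hloss, integral_add hψ2_int hF_int]
    ring


theorem tripleCMMD_eq
    [StandardBorelSpace 𝕏] [StandardBorelSpace 𝕐]
    (ν : Measure 𝕏) [IsProbabilityMeasure ν]
    (κ : Kernel 𝕏 𝕐) [IsMarkovKernel κ]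
    [MeasurableSpace H] [BorelSpace H] [CompleteSpace H] [SecondCountableTopology H]
    (ψ : 𝕐 → H) (hψ : Measurable ψ) (C : ℝ) (hψ_bdd : ∀ y, ‖ψ y‖ ≤ C)
    (T : 𝕏 → 𝕏 → 𝕐 → 𝕐)
    (hT : Measurable fun q : (𝕏 × 𝕏) × 𝕐 => T q.1.1 q.1.2 q.2) :
    tripleCMMD ν κ ψ T
      = (∫ x, ‖mEmb κ ψ x - gEmb ν κ ψ T x‖ ^ 2 ∂ν) - ∫ x, ‖mEmb κ ψ x‖ ^ 2 ∂ν ∧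
    tripleCMMD ν κ ψ T
      = cmmdLoss ν κ ψ T - ∫ z, ‖ψ z.2‖ ^ 2 ∂(ν.compProd κ) ∧
    ∃ c : ℝ, ∀ T' : 𝕏 → 𝕏 → 𝕐 → 𝕐,
      (Measurable fun q : (𝕏 × 𝕏) × 𝕐 => T' q.1.1 q.1.2 q.2) →
      tripleCMMD ν κ ψ T' = cmmdLoss ν κ ψ T' + c := by
  obtain ⟨h1, h2⟩ := tripleCMMD_eq_aux ν κ ψ hψ.stronglyMeasurable C hψ_bdd T hT
  refine ⟨h1, h2, -∫ z, ‖ψ z.2‖ ^ 2 ∂(ν.compProd κ), fun T' hT' => ?_⟩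
  have h2' := (tripleCMMD_eq_aux ν κ ψ hψ.stronglyMeasurable C hψ_bdd T' hT').2
  rw [h2']
  ring

end
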